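/- arXiv:2002.08659 — 3 statements merged into one kernel-verified Lean document; each statement's English description precedes it below -/
import Mathlib

section
/- Let G be a graph, c even with c ≥ 4, and A a periphery component (each vertex of A has degree at most c/2+1 in G). If some edge {u,v} ∈ E(A) lies in a triangle of G, then A is good. -/
open SimpleGraph

def IsSTCLabeling {V : Type*} (G : SimpleGraph V) (c : ℕ) (ℓ : Sym2 V → ℕ) : Prop :=
  (∀ e ∈ G.edgeSet, ℓ e ≤ c) ∧
  ∀ u v w : V, u ≠ w → G.Adj u v → G.Adj v w → ¬ G.Adj u w →
    ℓ s(u, v) = ℓ s(v, w) → ℓ s(u, v) = 0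

def IsGoodComponent {V : Type*} (G : SimpleGraph V) (c : ℕ) (A : Set V) : Prop :=
  ∀ ℓ : Sym2 V → ℕ, IsSTCLabeling G c ℓ →
    (∀ e ∈ G.edgeSet, (∀ x ∈ e, x ∈ A) → ℓ e = 0) →
    ∃ ℓ' : Sym2 V → ℕ, IsSTCLabeling G c ℓ' ∧
      (∀ e ∈ G.edgeSet, ¬ (∀ x ∈ e, x ∈ A) → ℓ' e = ℓ e) ∧
      (∀ e ∈ G.edgeSet, (∀ x ∈ e, x ∈ A) → ℓ' e ≠ 0)

namespace TriangleGood

variable {V : Type*} [Fintype V] [DecidableEq V]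

/-- Two edges conflict if they form an induced `P₃`. -/
def Conf (G : SimpleGraph V) (e f : Sym2 V) : Prop :=
  ∃ a b d : V, e = s(a, b) ∧ f = s(b, d) ∧ a ≠ d ∧ G.Adj a b ∧ G.Adj b d ∧ ¬ G.Adj a d

lemma Conf.symm {G : SimpleGraph V} {e f : Sym2 V} (h : Conf G e f) : Conf G f e := by
  obtain ⟨a, b, d, he, hf, had, h1, h2, h3⟩ := h
  exact ⟨d, b, a, by rw [hf, Sym2.eq_swap], by rw [he, Sym2.eq_swap], had.symm,
    h2.symm, h1.symm, fun h => h3 h.symm⟩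

lemma Conf.ne {G : SimpleGraph V} {e f : Sym2 V} (h : Conf G e f) : e ≠ f := by
  obtain ⟨a, b, d, he, hf, had, h1, h2, h3⟩ := h
  subst he; subst hf
  intro hEq
  rcases Sym2.eq_iff.1 hEq with ⟨h4, h5⟩ | ⟨h4, h5⟩
  · exact G.ne_of_adj h1 h4
  · exact had h4

lemma Conf.mem_edgeSet {G : SimpleGraph V} {e f : Sym2 V} (h : Conf G e f) : f ∈ G.edgeSet := by
  obtain ⟨a, b, d, he, hf, had, h1, h2, h3⟩ := h
  subst hf; exact h2

lemma conf_subset (G : SimpleGraph V) (x y : V) :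
    {f | Conf G s(x, y) f} ⊆
      ((fun z => s(x, z)) '' (G.neighborSet x \ {y})) ∪
      ((fun z => s(y, z)) '' (G.neighborSet y \ {x})) := by
  rintro f ⟨a, b, d, he, hf, had, h1, h2, h3⟩
  rcases Sym2.eq_iff.1 he with ⟨hxa, hyb⟩ | ⟨hxb, hya⟩
  · subst hxa; subst hyb
    exact Or.inr ⟨d, ⟨h2, fun hd => had (Set.mem_singleton_iff.1 hd).symm⟩, hf.symm⟩
  · subst hxb; subst hya
    exact Or.inl ⟨d, ⟨h2, fun hd => had (Set.mem_singleton_iff.1 hd).symm⟩, hf.symm⟩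

lemma conf_subset_tri (G : SimpleGraph V) (x y w : V) (hxw : G.Adj x w) (hyw : G.Adj y w) :
    {f | Conf G s(x, y) f} ⊆
      ((fun z => s(x, z)) '' (G.neighborSet x \ {y, w})) ∪
      ((fun z => s(y, z)) '' (G.neighborSet y \ {x, w})) := by
  rintro f ⟨a, b, d, he, hf, had, h1, h2, h3⟩
  rcases Sym2.eq_iff.1 he with ⟨hxa, hyb⟩ | ⟨hxb, hya⟩
  · subst hxa; subst hyb
    refine Or.inr ⟨d, ⟨h2, ?_⟩, hf.symm⟩
    rintro (rfl | rfl)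
    · exact had rfl
    · exact h3 hxw
  · subst hxb; subst hya
    refine Or.inl ⟨d, ⟨h2, ?_⟩, hf.symm⟩
    rintro (rfl | rfl)
    · exact had rfl
    · exact h3 hyw

lemma card_conf_le (G : SimpleGraph V) (c : ℕ) {x y : V}
    (hx : (G.neighborSet x).ncard ≤ c / 2 + 1) (hy : (G.neighborSet y).ncard ≤ c / 2 + 1)
    (hxy : G.Adj x y) :
    {f | Conf G s(x, y) f}.ncard ≤ c := by
  have h1 := Set.ncard_le_ncard (conf_subset G x y) (Set.toFinite _)
  have h2 := Set.ncard_union_le ((fun z => s(x, z)) '' (G.neighborSet x \ {y}))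
    ((fun z => s(y, z)) '' (G.neighborSet y \ {x}))
  have h3 : ((fun z => s(x, z)) '' (G.neighborSet x \ {y})).ncard ≤
      (G.neighborSet x \ {y}).ncard := Set.ncard_image_le (Set.toFinite _)
  have h4 : ((fun z => s(y, z)) '' (G.neighborSet y \ {x})).ncard ≤
      (G.neighborSet y \ {x}).ncard := Set.ncard_image_le (Set.toFinite _)
  have h5 : (G.neighborSet x \ {y}).ncard = (G.neighborSet x).ncard - 1 :=
    Set.ncard_diff_singleton_of_mem hxy
  have h6 : (G.neighborSet y \ {x}).ncard = (G.neighborSet y).ncard - 1 :=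
    Set.ncard_diff_singleton_of_mem hxy.symm
  omega

lemma card_conf_tri_le (G : SimpleGraph V) (c : ℕ) {x y w : V}
    (hx : (G.neighborSet x).ncard ≤ c / 2 + 1) (hy : (G.neighborSet y).ncard ≤ c / 2 + 1)
    (hxy : G.Adj x y) (hxw : G.Adj x w) (hyw : G.Adj y w) :
    {f | Conf G s(x, y) f}.ncard ≤ c - 2 := by
  have h1 := Set.ncard_le_ncard (conf_subset_tri G x y w hxw hyw) (Set.toFinite _)
  have h2 := Set.ncard_union_le ((fun z => s(x, z)) '' (G.neighborSet x \ {y, w}))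
    ((fun z => s(y, z)) '' (G.neighborSet y \ {x, w}))
  have h3 : ((fun z => s(x, z)) '' (G.neighborSet x \ {y, w})).ncard ≤
      (G.neighborSet x \ {y, w}).ncard := Set.ncard_image_le (Set.toFinite _)
  have h4 : ((fun z => s(y, z)) '' (G.neighborSet y \ {x, w})).ncard ≤
      (G.neighborSet y \ {x, w}).ncard := Set.ncard_image_le (Set.toFinite _)
  have hsub1 : ({y, w} : Set V) ⊆ G.neighborSet x := by
    rintro t (rfl | rfl)
    · exact hxy
    · exact hxw
  have hsub2 : ({x, w} : Set V) ⊆ G.neighborSet y := by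
    rintro t (rfl | rfl)
    · exact hxy.symm
    · exact hyw
  have h5 : (G.neighborSet x \ {y, w}).ncard = (G.neighborSet x).ncard - 2 := by
    rw [Set.ncard_diff hsub1 (Set.toFinite _), Set.ncard_pair (G.ne_of_adj hyw)]
  have h6 : (G.neighborSet y \ {x, w}).ncard = (G.neighborSet y).ncard - 2 := by
    rw [Set.ncard_diff hsub2 (Set.toFinite _), Set.ncard_pair (G.ne_of_adj hxw)]
  have h7 : ({y, w} : Set V).ncard ≤ (G.neighborSet x).ncard :=
    Set.ncard_le_ncard hsub1 (Set.toFinite _)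
  have h8 : ({x, w} : Set V).ncard ≤ (G.neighborSet y).ncard :=
    Set.ncard_le_ncard hsub2 (Set.toFinite _)
  rw [Set.ncard_pair (G.ne_of_adj hyw)] at h7
  rw [Set.ncard_pair (G.ne_of_adj hxw)] at h8
  omega

lemma key_bound (G : SimpleGraph V) (c : ℕ) {x y : V}
    (hx : (G.neighborSet x).ncard ≤ c / 2 + 1) (hy : (G.neighborSet y).ncard ≤ c / 2 + 1)
    (hxy : G.Adj x y) {f : Sym2 V} (hfE : f ∈ G.edgeSet) (hne : s(x, y) ≠ f) (hxf : x ∈ f) :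
    Conf G s(x, y) f ∨ {g | Conf G s(x, y) g}.ncard ≤ c - 2 := by
  obtain ⟨w', rfl⟩ := Sym2.mem_iff_exists.1 hxf
  have hxw' : G.Adj x w' := (SimpleGraph.mem_edgeSet G).1 hfE
  have hw'y : w' ≠ y := by
    rintro rfl
    exact hne rfl
  by_cases hyw' : G.Adj y w'
  · exact Or.inr (card_conf_tri_le G c hx hy hxy hxw' hyw')
  · exact Or.inl ⟨y, x, w', Sym2.eq_swap, rfl, hw'y.symm, hxy.symm, hxw', hyw'⟩

lemma greedy_exists (G : SimpleGraph V) (c : ℕ) (hc : 1 ≤ c) (ℓ : Sym2 V → ℕ)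
    (D : Set (Sym2 V)) (k : Sym2 V → ℕ) (hinj : Set.InjOn k D)
    (H : ∀ e ∈ D, {f | Conf G e f ∧ (f ∉ D ∨ k f < k e)}.ncard < c) :
    ∃ ℓ' : Sym2 V → ℕ, (∀ e, e ∉ D → ℓ' e = ℓ e) ∧
      (∀ e ∈ D, ℓ' e ∈ Finset.Icc 1 c) ∧
      (∀ e ∈ D, ∀ f, Conf G e f → (f ∉ D ∨ k f < k e) → ℓ' e ≠ ℓ' f) := by
  classical
  suffices h : ∀ n : ℕ, ∃ ℓ' : Sym2 V → ℕ,
      (∀ e, ¬(e ∈ D ∧ k e < n) → ℓ' e = ℓ e) ∧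
      (∀ e ∈ D, k e < n → ℓ' e ∈ Finset.Icc 1 c ∧
        ∀ f, Conf G e f → (f ∉ D ∨ k f < k e) → ℓ' e ≠ ℓ' f) by
    obtain ⟨ℓ', h1, h2⟩ := h (Finset.univ.sup k + 1)
    have hk : ∀ e : Sym2 V, k e < Finset.univ.sup k + 1 :=
      fun e => Nat.lt_succ_of_le (Finset.le_sup (Finset.mem_univ e))
    exact ⟨ℓ', fun e he => h1 e (fun hh => he hh.1),
      fun e he => (h2 e he (hk e)).1, fun e he => (h2 e he (hk e)).2⟩
  intro n
  induction n with
  | zero => exact ⟨ℓ, fun e _ => rfl, fun e _ h => absurd h (Nat.not_lt_zero _)⟩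
  | succ n ih =>
    obtain ⟨ℓ', h1, h2⟩ := ih
    by_cases hex : ∃ e ∈ D, k e = n
    · obtain ⟨e, heD, hkn⟩ := hex
      have hfin : ({f | Conf G e f ∧ (f ∉ D ∨ k f < k e)}).Finite := Set.toFinite _
      set forb : Finset ℕ := hfin.toFinset.image ℓ' with hforb
      have hcard : forb.card < c := by
        refine lt_of_le_of_lt Finset.card_image_le ?_
        rw [← Set.ncard_eq_toFinset_card _ hfin]
        exact H e heD
      obtain ⟨m, hmIcc, hmforb⟩ : ∃ m ∈ Finset.Icc 1 c, m ∉ forb := by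
        by_contra hcon
        push_neg at hcon
        have : (Finset.Icc 1 c).card ≤ forb.card := Finset.card_le_card hcon
        rw [Nat.card_Icc] at this
        omega
      refine ⟨Function.update ℓ' e m, ?_, ?_⟩
      · intro e' he'
        have hne : e' ≠ e := by
          rintro rfl
          exact he' ⟨heD, by omega⟩
        rw [Function.update_of_ne hne]
        exact h1 e' (fun hh => he' ⟨hh.1, by omega⟩)
      · intro e' he'D hke'
        rcases Nat.lt_succ_iff_lt_or_eq.1 hke' with hlt | heq
        · have hne : e' ≠ e := by
            rintro rfl
            omega
          rw [Function.update_of_ne hne]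
          refine ⟨(h2 e' he'D hlt).1, ?_⟩
          intro f hcf hfix
          by_cases hfe : f = e
          · subst hfe
            rcases hfix with hfD | hkf
            · exact absurd heD hfD
            · omega
          · rw [Function.update_of_ne hfe]
            exact (h2 e' he'D hlt).2 f hcf hfix
        · have he'e : e' = e := hinj he'D heD (by omega)
          subst he'e
          rw [Function.update_self]
          refine ⟨hmIcc, ?_⟩
          intro f hcf hfix
          have hfe : f ≠ e' := fun hh => (Conf.ne hcf) hh.symm
          rw [Function.update_of_ne hfe]
          intro hmf
          apply hmforb
          rw [hforb]
          refine Finset.mem_image.2 ⟨f, ?_, hmf.symm⟩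
          rw [Set.Finite.mem_toFinset]
          exact ⟨hcf, hfix⟩
    · push_neg at hex
      refine ⟨ℓ', fun e he => h1 e (fun hh => he ⟨hh.1, by omega⟩), ?_⟩
      intro e heD hke
      have : k e < n := by
        rcases Nat.lt_succ_iff_lt_or_eq.1 hke with h | h
        · exact h
        · exact absurd h (hex e heD)
      exact h2 e heD this

end TriangleGood

open TriangleGood

/-- For even `c ≥ 4`, a periphery component containing an edge of a triangle
of `G` is good. -/
theorem triangle_edge_implies_good {V : Type*} [Fintype V] [DecidableEq V]
    (G : SimpleGraph V) (c : ℕ) (hc : 4 ≤ c) (heven : Even c)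
    (Pset : Set V) (hP : Pset = {v : V | (G.neighborSet v).ncard ≤ c / 2 + 1})
    (K : (G.induce Pset).ConnectedComponent)
    (A : Set V) (hA : A = (fun x : ↥Pset => (x : V)) '' K.supp)
    (u v : V) (huv : G.Adj u v) (hu : u ∈ A) (hv : v ∈ A)
    (htri : ∃ w : V, G.Adj u w ∧ G.Adj v w) :
    IsGoodComponent G c A := by
  classical
  intro ℓ hℓ h0
  obtain ⟨w, hwu, hwv⟩ := htri
  set D : Set (Sym2 V) := {e | e ∈ G.edgeSet ∧ ∀ x ∈ e, x ∈ A} with hD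
  have hAP : A ⊆ Pset := by
    rw [hA]; rintro _ ⟨x, _, rfl⟩; exact x.2
  have hdeg : ∀ x ∈ A, (G.neighborSet x).ncard ≤ c / 2 + 1 := by
    intro x hx
    have := hAP hx
    rw [hP] at this
    exact this
  have he₀D : s(u, v) ∈ D := by
    refine ⟨huv, ?_⟩
    intro x hx
    rcases Sym2.mem_iff.1 hx with rfl | rfl
    · exact hu
    · exact hv
  -- the auxiliary graph on edges of D sharing a vertex
  set r : Sym2 V → Sym2 V → Prop :=
    fun e f => e ∈ D ∧ f ∈ D ∧ ∃ t, t ∈ e ∧ t ∈ f with hr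
  set HG : SimpleGraph (Sym2 V) := SimpleGraph.fromRel r with hHG
  have step : ∀ e g : Sym2 V, e ∈ D → g ∈ D → (∃ t, t ∈ e ∧ t ∈ g) → HG.Reachable e g := by
    intro e g heD hgD hsh
    by_cases heg : e = g
    · subst heg; exact Reachable.refl e
    · exact SimpleGraph.Adj.reachable
        ((SimpleGraph.fromRel_adj r e g).2 ⟨heg, Or.inl ⟨heD, hgD, hsh⟩⟩)
  have memA_iff : ∀ x : ↥Pset, (x : V) ∈ A ↔ x ∈ K.supp := by
    intro x
    rw [hA]
    constructor
    · rintro ⟨x', hx', hxe⟩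
      rwa [Subtype.coe_injective hxe] at hx'
    · intro hx
      exact ⟨x, hx, rfl⟩
  have W : ∀ (a b : ↥Pset) (p : (G.induce Pset).Walk a b), (a : V) ∈ A →
      ∀ e f : Sym2 V, e ∈ D → f ∈ D → (a : V) ∈ e → (b : V) ∈ f → HG.Reachable e f := by
    intro a b p
    induction p with
    | nil =>
      intro haA e f heD hfD hae haf
      exact step e f heD hfD ⟨_, hae, haf⟩
    | @cons a z b hadj q ih =>
      intro haA e f heD hfD hae hbf
      have hGaz : G.Adj (a : V) (z : V) := hadj
      have hzA : (z : V) ∈ A := by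
        rw [memA_iff] at haA ⊢
        rw [SimpleGraph.ConnectedComponent.mem_supp_iff] at haA ⊢
        rw [← haA]
        exact SimpleGraph.ConnectedComponent.sound hadj.symm.reachable
      have hgD : s((a : V), (z : V)) ∈ D := by
        refine ⟨(SimpleGraph.mem_edgeSet G).2 hGaz, ?_⟩
        intro t ht
        rcases Sym2.mem_iff.1 ht with rfl | rfl
        · exact haA
        · exact hzA
      have r1 := step e s((a : V), (z : V)) heD hgD ⟨_, hae, Sym2.mem_mk_left _ _⟩
      have r2 := ih hzA s((a : V), (z : V)) f hgD hfD (Sym2.mem_mk_right _ _) hbf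
      exact r1.trans r2
  have hreach : ∀ e ∈ D, HG.Reachable s(u, v) e := by
    intro e
    induction e using Sym2.ind with
    | _ x y =>
      intro heD
      have hxA : x ∈ A := heD.2 x (Sym2.mem_mk_left _ _)
      obtain ⟨u', hu's, hu'c⟩ : ∃ u' : ↥Pset, u' ∈ K.supp ∧ (u' : V) = u := by
        rw [hA] at hu; obtain ⟨u', h1, h2⟩ := hu; exact ⟨u', h1, h2⟩
      obtain ⟨x', hx's, hx'c⟩ : ∃ x' : ↥Pset, x' ∈ K.supp ∧ (x' : V) = x := by
        rw [hA] at hxA; obtain ⟨x', h1, h2⟩ := hxA; exact ⟨x', h1, h2⟩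
      have hmk : (G.induce Pset).connectedComponentMk u' = (G.induce Pset).connectedComponentMk x' := by
        rw [SimpleGraph.ConnectedComponent.mem_supp_iff] at hu's hx's
        rw [hu's, hx's]
      obtain ⟨p⟩ := SimpleGraph.ConnectedComponent.exact hmk
      refine W u' x' p (by rw [hu'c]; exact hu) s(u, v) s(x, y) he₀D heD ?_ ?_
      · rw [hu'c]; exact Sym2.mem_mk_left _ _
      · rw [hx'c]; exact Sym2.mem_mk_left _ _
  -- the priority function
  set n : ℕ := Fintype.card (Sym2 V) with hn
  set ι : Sym2 V → ℕ := fun e => ((Fintype.equivFin (Sym2 V)) e : ℕ) with hι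
  have hιlt : ∀ e, ι e < n := fun e => ((Fintype.equivFin (Sym2 V)) e).2
  set B : ℕ := Finset.univ.sup (fun e => HG.dist s(u, v) e) with hB
  have hdB : ∀ e : Sym2 V, HG.dist s(u, v) e ≤ B :=
    fun e => Finset.le_sup (f := fun e => HG.dist s(u, v) e) (Finset.mem_univ e)
  set k : Sym2 V → ℕ := fun e => (B - HG.dist s(u, v) e) * n + ι e with hk
  have hmod : ∀ e, k e % n = ι e := by
    intro e
    show ((B - HG.dist s(u, v) e) * n + ι e) % n = ι e
    rw [Nat.mul_comm, Nat.mul_add_mod]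
    exact Nat.mod_eq_of_lt (hιlt e)
  have hinj : Function.Injective k := by
    intro e f hef
    have : ι e = ι f := by rw [← hmod e, ← hmod f, hef]
    exact (Fintype.equivFin (Sym2 V)).injective (Fin.val_injective this)
  -- the key hypothesis for the greedy lemma
  have hH : ∀ e ∈ D, {f | Conf G e f ∧ (f ∉ D ∨ k f < k e)}.ncard < c := by
    intro e
    induction e using Sym2.ind with
    | _ x y =>
      intro heD
      have hxy : G.Adj x y := heD.1
      have hxA : x ∈ A := heD.2 x (Sym2.mem_mk_left _ _)
      have hyA : y ∈ A := heD.2 y (Sym2.mem_mk_right _ _)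
      have hxP := hdeg x hxA
      have hyP := hdeg y hyA
      by_cases h00 : s(x, y) = s(u, v)
      · obtain ⟨w', hxw', hyw'⟩ : ∃ w', G.Adj x w' ∧ G.Adj y w' := by
          rcases Sym2.eq_iff.1 h00 with ⟨rfl, rfl⟩ | ⟨rfl, rfl⟩
          · exact ⟨w, hwu, hwv⟩
          · exact ⟨w, hwv, hwu⟩
        have h1 : {f | Conf G s(x, y) f ∧ (f ∉ D ∨ k f < k s(x, y))}.ncard ≤
            {f | Conf G s(x, y) f}.ncard :=
          Set.ncard_le_ncard (fun f hf => hf.1) (Set.toFinite _)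
        have h2 := card_conf_tri_le G c hxP hyP hxy hxw' hyw'
        omega
      · have hrx : HG.Reachable s(u, v) s(x, y) := hreach _ heD
        set d : ℕ := HG.dist s(u, v) s(x, y) with hd
        have hd1 : 1 ≤ d := by
          have := hrx.pos_dist_of_ne (fun hh => h00 hh.symm)
          omega
        obtain ⟨p, hp⟩ := hrx.exists_walk_length_eq_dist
        obtain ⟨f, hadj, q, hq⟩ : ∃ (f : Sym2 V) (_ : HG.Adj s(x, y) f)
            (q : HG.Walk f s(u, v)), q.length + 1 = p.length := by
          obtain ⟨f, ha, q, hq⟩ := SimpleGraph.Walk.exists_eq_cons_of_ne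
            (fun hh => h00 hh) p.reverse
          refine ⟨f, ha, q, ?_⟩
          have := congrArg SimpleGraph.Walk.length hq
          simpa [Nat.add_comm] using this.symm
        have hdf : HG.dist s(u, v) f ≤ d - 1 := by
          have h1 : HG.dist s(u, v) f ≤ q.reverse.length := SimpleGraph.dist_le q.reverse
          rw [SimpleGraph.Walk.length_reverse] at h1
          omega
        have hkk : k s(x, y) < k f := by
          have hfd : HG.dist s(u, v) f < d := by omega
          have hdB' : d ≤ B := hdB s(x, y)
          have h1 : B - d + 1 ≤ B - HG.dist s(u, v) f := by omega
          calc k s(x, y) = (B - d) * n + ι s(x, y) := rfl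
            _ < (B - d) * n + n := by have := hιlt s(x, y); omega
            _ = (B - d + 1) * n := by ring
            _ ≤ (B - HG.dist s(u, v) f) * n := Nat.mul_le_mul_right n h1
            _ ≤ (B - HG.dist s(u, v) f) * n + ι f := Nat.le_add_right _ _
            _ = k f := rfl
        rw [hHG, SimpleGraph.fromRel_adj] at hadj
        obtain ⟨hnef, hrel⟩ := hadj
        have hfD : f ∈ D := by
          rcases hrel with h | h
          · exact h.2.1
          · exact h.1
        have hshare : ∃ t, t ∈ s(x, y) ∧ t ∈ f := by
          rcases hrel with h | h
          · exact h.2.2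
          · obtain ⟨t, ht1, ht2⟩ := h.2.2
            exact ⟨t, ht2, ht1⟩
        obtain ⟨z, hz1, hz2⟩ := hshare
        have hkey : Conf G s(x, y) f ∨ {g | Conf G s(x, y) g}.ncard ≤ c - 2 := by
          rcases Sym2.mem_iff.1 hz1 with rfl | rfl
          · exact key_bound G c hxP hyP hxy hfD.1 hnef hz2
          · have hsw : s(z, x) = s(x, z) := Sym2.eq_swap
            have h' := key_bound G c hyP hxP hxy.symm (f := f) hfD.1
              (by rw [hsw]; exact hnef) hz2
            rw [hsw] at h'
            exact h'
        rcases hkey with hconf | hsmall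
        · have hsub : {g | Conf G s(x, y) g ∧ (g ∉ D ∨ k g < k s(x, y))} ⊆
              {g | Conf G s(x, y) g} \ {f} := by
            rintro g ⟨hg, hfix⟩
            refine ⟨hg, ?_⟩
            intro hgf
            rw [Set.mem_singleton_iff] at hgf
            subst hgf
            rcases hfix with h | h
            · exact h hfD
            · omega
          have h1 := Set.ncard_le_ncard hsub (Set.toFinite _)
          have h2 := card_conf_le G c hxP hyP hxy
          have h3 : ({g | Conf G s(x, y) g} \ {f}).ncard =
              {g | Conf G s(x, y) g}.ncard - 1 :=
            Set.ncard_diff_singleton_of_mem hconf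
          have h4 : 0 < {g | Conf G s(x, y) g}.ncard := by
            rw [Set.ncard_pos (Set.toFinite _)]
            exact ⟨f, hconf⟩
          omega
        · have h1 : {f | Conf G s(x, y) f ∧ (f ∉ D ∨ k f < k s(x, y))}.ncard ≤
              {f | Conf G s(x, y) f}.ncard :=
            Set.ncard_le_ncard (fun f hf => hf.1) (Set.toFinite _)
          omega
  obtain ⟨ℓ', hoff, hmem, hdist⟩ :=
    greedy_exists G c (by omega) ℓ D k hinj.injOn hH
  refine ⟨ℓ', ⟨?_, ?_⟩, ?_, ?_⟩
  · -- bounds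
    intro e he
    by_cases heD : e ∈ D
    · exact (Finset.mem_Icc.1 (hmem e heD)).2
    · rw [hoff e heD]
      exact hℓ.1 e he
  · -- STC condition
    intro a b d hne h1 h2 h3 heq
    have hcf : Conf G s(a, b) s(b, d) := ⟨a, b, d, rfl, rfl, hne, h1, h2, h3⟩
    by_cases heD : s(a, b) ∈ D
    · by_cases hfD : s(b, d) ∈ D
      · exfalso
        have hne2 : k s(a, b) ≠ k s(b, d) := fun hh => (Conf.ne hcf) (hinj hh)
        rcases Nat.lt_or_ge (k s(b, d)) (k s(a, b)) with h | h
        · exact hdist _ heD _ hcf (Or.inr h) heq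
        · exact hdist _ hfD _ hcf.symm (Or.inr (by omega)) heq.symm
      · exact absurd heq (hdist _ heD _ hcf (Or.inl hfD))
    · by_cases hfD : s(b, d) ∈ D
      · exact absurd heq.symm (hdist _ hfD _ hcf.symm (Or.inl heD))
      · rw [hoff _ heD, hoff _ hfD] at heq
        rw [hoff _ heD]
        exact hℓ.2 a b d hne h1 h2 h3 heq
  · -- agreement outside
    intro e he hni
    exact hoff e (fun hh => hni hh.2)
  · -- nonzero inside
    intro e he hi
    have heD : e ∈ D := ⟨he, hi⟩
    have := (Finset.mem_Icc.1 (hmem e heD)).1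
    omega
end

section
/- Let A be a periphery component (vertices of degree at most ⌊c/2⌋+1), L an STC-labeling of G, and P=(v_0,…,v_{r-1},v_0) a cycle in A with at least one weak edge of L on P and color sequence (q_0,…,q_{r-1}). Then for each i ∈ {0,…,r−1} there exists an STC-labeling L_i agreeing with L outside E(P) such that either the color sequence of P under L_i is the cyclic rotation j ↦ q_{(i+j) mod r}, or L_i has strictly fewer weak edges than L. -/
open SimpleGraph

noncomputable def weakCount {V : Type*} (G : SimpleGraph V) (ℓ : Sym2 V → ℕ) : ℕ :=
  {e ∈ G.edgeSet | ℓ e = 0}.ncard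

/-- Rotating the color sequence around a cycle inside a set of low-degree
vertices that carries at least one weak edge: for every `i` there is a labeling
agreeing with `L` outside the cycle whose color sequence is the `i`-th cyclic
rotation, or one with strictly fewer weak edges. -/
theorem rotate_colors_around_cycle {V : Type*} [Fintype V] [DecidableEq V]
    (G : SimpleGraph V) (c : ℕ)
    (A : Set V) (hdeg : ∀ a ∈ A, (G.neighborSet a).ncard ≤ c / 2 + 1)
    (ℓ : Sym2 V → ℕ) (hstc : IsSTCLabeling G c ℓ)
    (r : ℕ) (hr : 3 ≤ r) (P : ℕ → V)
    (hadj : ∀ i < r, G.Adj (P i) (P ((i + 1) % r)))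
    (hA : ∀ i < r, P i ∈ A)
    (hinj : ∀ i < r, ∀ j < r, P i = P j → i = j)
    (hweak : ∃ i < r, ℓ s(P i, P ((i + 1) % r)) = 0)
    (EP : Set (Sym2 V)) (hEP : EP = {e | ∃ i < r, e = s(P i, P ((i + 1) % r))}) :
    ∀ i < r, ∃ ℓᵢ : Sym2 V → ℕ, IsSTCLabeling G c ℓᵢ ∧
      (∀ e : Sym2 V, e ∉ EP → ℓᵢ e = ℓ e) ∧
      ((∀ j < r, ℓᵢ s(P j, P ((j + 1) % r)) =
          ℓ s(P ((i + j) % r), P ((i + j + 1) % r))) ∨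
        weakCount G ℓᵢ < weakCount G ℓ) := by
  classical
  have hr0 : 0 < r := by omega
  -- modular arithmetic helpers
  have modlt : ∀ x : ℕ, x % r < r := fun x => Nat.mod_lt x hr0
  have addL : ∀ x y : ℕ, (x % r + y) % r = (x + y) % r := fun x y =>
    (Nat.mod_modEq x r).add_right y
  have addR : ∀ x y : ℕ, (x + y % r) % r = (x + y) % r := fun x y =>
    (Nat.mod_modEq y r).add_left x
  have hcanc : ∀ h s t : ℕ, s < r → t < r → (h + s) % r = (h + t) % r → s = t := by
    intro h s t hs ht he
    have := Nat.ModEq.add_left_cancel' h he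
    rwa [Nat.ModEq, Nat.mod_eq_of_lt hs, Nat.mod_eq_of_lt ht] at this
  have hsucc : ∀ x, x < r → (x + 1) % r = x + 1 ∨ (x + 1 = r ∧ (x + 1) % r = 0) := by
    intro x hx
    rcases Nat.lt_or_ge (x + 1) r with hlt | hge
    · exact Or.inl (Nat.mod_eq_of_lt hlt)
    · have hxr : x + 1 = r := by omega
      exact Or.inr ⟨hxr, by rw [hxr, Nat.mod_self]⟩
  -- edge function
  set E : ℕ → Sym2 V := fun j => s(P j, P ((j + 1) % r)) with hEdef
  have hedge : ∀ j, j < r → E j ∈ G.edgeSet := fun j hj => G.mem_edgeSet.mpr (hadj j hj)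
  have hEmem : ∀ j, j < r → E j ∈ EP := by
    intro j hj; rw [hEP]; exact ⟨j, hj, rfl⟩
  have hPne : ∀ j, j < r → ∀ k, k < r → j ≠ k → P j ≠ P k := by
    intro j hj k hk hne hpe; exact hne (hinj j hj k hk hpe)
  have hEinj : ∀ j, j < r → ∀ k, k < r → E j = E k → j = k := by
    intro j hj k hk hjk
    rw [hEdef] at hjk
    simp only [Sym2.eq_iff] at hjk
    rcases hjk with ⟨e1, _⟩ | ⟨e1, e2⟩
    · exact hinj j hj k hk e1
    · have m1 : j = (k + 1) % r := hinj j hj _ (modlt _) e1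
      have m2 : (j + 1) % r = k := hinj _ (modlt _) k hk e2
      rcases hsucc k hk with hk1 | ⟨hk1, hk2⟩ <;> rcases hsucc j hj with hj1 | ⟨hj1, hj2⟩ <;>
        omega
  -- the micro-step lemma: move the weak edge one position forward
  have micro : ∀ μ : Sym2 V → ℕ, IsSTCLabeling G c μ → (∀ e, e ∉ EP → μ e = ℓ e) →
      ∀ h, h < r → μ (E h) = 0 →
      ∃ ν : Sym2 V → ℕ, IsSTCLabeling G c ν ∧ (∀ e, e ∉ EP → ν e = ℓ e) ∧
        ((ν (E h) = μ (E ((h + 1) % r)) ∧ ν (E ((h + 1) % r)) = 0 ∧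
          (∀ j, j < r → j ≠ h → j ≠ (h + 1) % r → ν (E j) = μ (E j)) ∧
          weakCount G ν ≤ weakCount G μ) ∨ weakCount G ν < weakCount G μ) := by
    intro μ hμ hagμ h hh hole
    set h1 := (h + 1) % r with hh1def
    have hh1 : h1 < r := modlt _
    set h2 := (h1 + 1) % r with hh2def
    have hh2 : h2 < r := modlt _
    have hdist : h ≠ h1 ∧ h1 ≠ h2 ∧ h ≠ h2 := by
      rcases hsucc h hh with ha | ⟨ha, hb⟩ <;> rcases hsucc h1 hh1 with hc | ⟨hc, hd⟩ <;> omega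
    set u := P h with hudef
    set v := P h1 with hvdef
    set w2 := P h2 with hw2def
    have hEh : E h = s(u, v) := rfl
    have hEh1 : E h1 = s(v, w2) := rfl
    have huv : G.Adj u v := hadj h hh
    have hvw2 : G.Adj v w2 := hadj h1 hh1
    have huw2 : u ≠ w2 := hPne h hh h2 hh2 hdist.2.2
    have hvne : v ≠ w2 := hvw2.ne
    have hEhne : E h ≠ E h1 := fun hE => hdist.1 (hEinj h hh h1 hh1 hE)
    set β := μ (E h1) with hβdef
    -- neighbor cardinalities
    have hNcard : ∀ a : V, a ∈ A → (G.neighborFinset a).card ≤ c / 2 + 1 := by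
      intro a ha
      rw [neighborFinset_def, ← Set.ncard_eq_toFinset_card']
      exact hdeg a ha
    have hNu : (G.neighborFinset u).card ≤ c / 2 + 1 := hNcard u (hA h hh)
    have hNv : (G.neighborFinset v).card ≤ c / 2 + 1 := hNcard v (hA h1 hh1)
    set F : Finset ℕ := ((G.neighborFinset u).erase v).image (fun x => μ s(u, x)) ∪
        (((G.neighborFinset v).erase u).erase w2).image (fun y => μ s(v, y)) with hFdef
    have hvmem : v ∈ G.neighborFinset u := (G.mem_neighborFinset u v).mpr huv
    have humem : u ∈ G.neighborFinset v := (G.mem_neighborFinset v u).mpr huv.symm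
    have hw2mem : w2 ∈ ((G.neighborFinset v).erase u) :=
      Finset.mem_erase.mpr ⟨fun hw => huw2 hw.symm, (G.mem_neighborFinset v w2).mpr hvw2⟩
    have hFcard : F.card ≤ c / 2 + (c / 2 + 1 - 2) := by
      calc F.card ≤ _ + _ := Finset.card_union_le _ _
        _ ≤ ((G.neighborFinset u).erase v).card +
            (((G.neighborFinset v).erase u).erase w2).card :=
          Nat.add_le_add (Finset.card_image_le) (Finset.card_image_le)
        _ ≤ c / 2 + (c / 2 + 1 - 2) := by
          rw [Finset.card_erase_of_mem hvmem, Finset.card_erase_of_mem hw2mem,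
            Finset.card_erase_of_mem humem]
          omega
    -- partner identification
    have partner : ∀ a b d : V, G.Adj a b → G.Adj b d → a ≠ d → s(a, b) = E h →
        s(b, d) = E h1 ∨ (μ s(b, d) ∈ F ∧ s(b, d) ≠ E h ∧ s(b, d) ≠ E h1) := by
      intro a b d hab hbd had hEq
      rw [hEh, Sym2.eq_iff] at hEq
      rcases hEq with ⟨rfl, rfl⟩ | ⟨rfl, rfl⟩
      · -- a = u, b = v
        by_cases hd : d = w2
        · left; rw [hEh1, hd]
        · right
          refine ⟨?_, ?_, ?_⟩
          · refine Finset.mem_union_right _ (Finset.mem_image.mpr ⟨d, ?_, rfl⟩)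
            exact Finset.mem_erase.mpr ⟨hd,
              Finset.mem_erase.mpr ⟨fun hdu => had hdu.symm,
                (G.mem_neighborFinset v d).mpr hbd⟩⟩
          · rw [hEh]; intro hcon
            rcases Sym2.eq_iff.mp hcon with ⟨hv1, _⟩ | ⟨_, hd1⟩
            · exact huv.ne hv1.symm
            · exact had hd1.symm
          · rw [hEh1]; intro hcon
            rcases Sym2.eq_iff.mp hcon with ⟨_, hd1⟩ | ⟨hv1, _⟩
            · exact hd hd1
            · exact hvne hv1
      · -- a = v, b = u
        right
        refine ⟨?_, ?_, ?_⟩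
        · refine Finset.mem_union_left _ (Finset.mem_image.mpr ⟨d, ?_, rfl⟩)
          exact Finset.mem_erase.mpr ⟨fun hdv => had hdv.symm,
            (G.mem_neighborFinset u d).mpr hbd⟩
        · rw [hEh]; intro hcon
          rcases Sym2.eq_iff.mp hcon with ⟨_, hd1⟩ | ⟨hu1, _⟩
          · exact had hd1.symm
          · exact huv.ne hu1
        · rw [hEh1]; intro hcon
          rcases Sym2.eq_iff.mp hcon with ⟨hu1, _⟩ | ⟨hu1, _⟩
          · exact huv.ne hu1
          · exact huw2 hu1
    by_cases hβ0 : β = 0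
    · refine ⟨μ, hμ, hagμ, Or.inl ⟨?_, ?_, fun j _ _ _ => rfl, le_rfl⟩⟩
      · rw [hole]; exact hβ0.symm
      · exact hβ0
    · have hc1 : 1 ≤ c := le_trans (Nat.one_le_iff_ne_zero.mpr hβ0)
        (hμ.1 _ (hedge h1 hh1))
    -- now two subcases
      by_cases hβF : β ∈ F
      · -- fallback: recolor E h with a fresh color, strictly fewer weak edges
        have hαex : ∃ α, α ∈ Finset.Icc 1 c \ F := by
          by_contra hcon
          push_neg at hcon
          have hsub : Finset.Icc 1 c ⊆ F := by
            intro x hx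
            by_contra hxF
            exact hcon x (Finset.mem_sdiff.mpr ⟨hx, hxF⟩)
          have := Finset.card_le_card hsub
          rw [Nat.card_Icc] at this
          omega
        obtain ⟨α, hα⟩ := hαex
        obtain ⟨hα1, hαF⟩ := Finset.mem_sdiff.mp hα
        rw [Finset.mem_Icc] at hα1
        set ν : Sym2 V → ℕ := fun f => if f = E h then α else μ f with hνdef
        have hνh : ν (E h) = α := by simp [hνdef]
        have hνother : ∀ f, f ≠ E h → ν f = μ f := by
          intro f hf; simp [hνdef, hf]
        refine ⟨ν, ⟨?_, ?_⟩, ?_, Or.inr ?_⟩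
        · intro e he
          by_cases hfe : e = E h
          · rw [hfe, hνh]; exact hα1.2
          · rw [hνother e hfe]; exact hμ.1 e he
        · intro a b d had hab hbd hnad heq
          by_cases hab1 : s(a, b) = E h
          · exfalso
            rcases partner a b d hab hbd had hab1 with hf | ⟨hmem, hne1, _⟩
            · rw [hab1, hνh, hf, hνother _ hEhne.symm, ← hβdef] at heq
              exact hαF (heq ▸ hβF)
            · rw [hab1, hνh, hνother _ hne1] at heq
              exact hαF (heq ▸ hmem)
          · by_cases hbd1 : s(b, d) = E h
            · exfalso
              have hdb : s(d, b) = E h := by rw [Sym2.eq_swap]; exact hbd1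
              rcases partner d b a hbd.symm hab.symm (Ne.symm had) hdb with hf | ⟨hmem, hne1, _⟩
              · rw [hbd1] at heq
                rw [show s(b, a) = s(a, b) from Sym2.eq_swap] at hf
                rw [hf, hνother _ hEhne.symm, ← hβdef, hνh] at heq
                exact hαF (heq ▸ hβF)
              · rw [show s(b, a) = s(a, b) from Sym2.eq_swap] at hmem hne1
                rw [hbd1, hνh, hνother _ hne1] at heq
                exact hαF (heq.symm ▸ hmem)
            · rw [hνother _ hab1, hνother _ hbd1] at heq
              rw [hνother _ hab1]
              exact hμ.2 a b d had hab hbd hnad heq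
        · intro e he
          have hne : e ≠ E h := fun hfe => he (hfe ▸ hEmem h hh)
          rw [hνother e hne]; exact hagμ e he
        · -- strictly fewer weak edges
          have hset : {e ∈ G.edgeSet | ν e = 0} = {e ∈ G.edgeSet | μ e = 0} \ {E h} := by
            ext f
            simp only [Set.mem_setOf_eq, Set.mem_diff, Set.mem_singleton_iff]
            constructor
            · rintro ⟨hfe, hf0⟩
              by_cases hfh : f = E h
              · rw [hfh, hνh] at hf0; omega
              · exact ⟨⟨hfe, by rwa [hνother f hfh] at hf0⟩, hfh⟩
            · rintro ⟨⟨hfe, hf0⟩, hfh⟩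
              exact ⟨hfe, by rwa [hνother f hfh]⟩
          have hmem0 : E h ∈ {e ∈ G.edgeSet | μ e = 0} := ⟨hedge h hh, hole⟩
          have hfin : ({e ∈ G.edgeSet | μ e = 0} : Set (Sym2 V)).Finite := Set.toFinite _
          have := Set.ncard_diff_singleton_add_one hmem0 hfin
          show ({e ∈ G.edgeSet | ν e = 0}).ncard < ({e ∈ G.edgeSet | μ e = 0}).ncard
          rw [hset]; omega
      · -- swap: move the weak edge forward
        set ν : Sym2 V → ℕ := fun f => if f = E h then β else if f = E h1 then 0 else μ f
          with hνdef
        have hνh : ν (E h) = β := by simp [hνdef]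
        have hνh1 : ν (E h1) = 0 := by simp [hνdef, hEhne.symm]
        have hνother : ∀ f, f ≠ E h → f ≠ E h1 → ν f = μ f := by
          intro f hf hf1; simp [hνdef, hf, hf1]
        refine ⟨ν, ⟨?_, ?_⟩, ?_, Or.inl ⟨hνh, hνh1, ?_, ?_⟩⟩
        · intro e he
          by_cases hfe : e = E h
          · rw [hfe, hνh, hβdef]; exact hμ.1 _ (hedge h1 hh1)
          · by_cases hfe1 : e = E h1
            · rw [hfe1, hνh1]; exact Nat.zero_le c
            · rw [hνother e hfe hfe1]; exact hμ.1 e he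
        · intro a b d had hab hbd hnad heq
          by_cases hab1 : s(a, b) = E h
          · exfalso
            rcases partner a b d hab hbd had hab1 with hf | ⟨hmem, hne1, hne2⟩
            · rw [hab1, hνh, hf, hνh1] at heq
              exact hβ0 heq
            · rw [hab1, hνh, hνother _ hne1 hne2] at heq
              exact hβF (heq ▸ hmem)
          · by_cases hbd1 : s(b, d) = E h
            · exfalso
              have hdb : s(d, b) = E h := by rw [Sym2.eq_swap]; exact hbd1
              rcases partner d b a hbd.symm hab.symm (Ne.symm had) hdb with hf | ⟨hmem, hne1, hne2⟩
              · rw [show s(b, a) = s(a, b) from Sym2.eq_swap] at hf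
                rw [hbd1, hνh, hf, hνh1] at heq
                exact hβ0 heq.symm
              · rw [show s(b, a) = s(a, b) from Sym2.eq_swap] at hmem hne1 hne2
                rw [hbd1, hνh, hνother _ hne1 hne2] at heq
                exact hβF (heq.symm ▸ hmem)
            · by_cases hab2 : s(a, b) = E h1
              · rw [hab2, hνh1]
              · by_cases hbd2 : s(b, d) = E h1
                · rw [hbd2, hνh1] at heq
                  rw [heq]
                · rw [hνother _ hab1 hab2, hνother _ hbd1 hbd2] at heq
                  rw [hνother _ hab1 hab2]
                  exact hμ.2 a b d had hab hbd hnad heq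
        · intro e he
          have hne : e ≠ E h := fun hfe => he (hfe ▸ hEmem h hh)
          have hne1 : e ≠ E h1 := fun hfe => he (hfe ▸ hEmem h1 hh1)
          rw [hνother e hne hne1]; exact hagμ e he
        · intro j hj hjh hjh1
          exact hνother (E j) (fun hE => hjh (hEinj j hj h hh hE))
            (fun hE => hjh1 (hEinj j hj h1 hh1 hE))
        · -- weak count does not increase
          have hset : {e ∈ G.edgeSet | ν e = 0} =
              insert (E h1) ({e ∈ G.edgeSet | μ e = 0} \ {E h}) := by
            ext f
            simp only [Set.mem_setOf_eq, Set.mem_diff, Set.mem_singleton_iff,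
              Set.mem_insert_iff]
            constructor
            · rintro ⟨hfe, hf0⟩
              by_cases hfh : f = E h
              · rw [hfh, hνh] at hf0; exact absurd hf0 hβ0
              · by_cases hfh1 : f = E h1
                · exact Or.inl hfh1
                · exact Or.inr ⟨⟨hfe, by rwa [hνother f hfh hfh1] at hf0⟩, hfh⟩
            · rintro (rfl | ⟨⟨hfe, hf0⟩, hfh⟩)
              · exact ⟨hedge h1 hh1, hνh1⟩
              · refine ⟨hfe, ?_⟩
                by_cases hfh1 : f = E h1
                · rw [hfh1, hνh1]
                · rw [hνother f hfh hfh1]; exact hf0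
          have hmem0 : E h ∈ {e ∈ G.edgeSet | μ e = 0} := ⟨hedge h hh, hole⟩
          have hfin : ({e ∈ G.edgeSet | μ e = 0} : Set (Sym2 V)).Finite := Set.toFinite _
          have h1' := Set.ncard_diff_singleton_add_one hmem0 hfin
          have h2' := Set.ncard_insert_le (E h1) ({e ∈ G.edgeSet | μ e = 0} \ {E h})
          show ({e ∈ G.edgeSet | ν e = 0}).ncard ≤ ({e ∈ G.edgeSet | μ e = 0}).ncard
          rw [hset]; omega
  -- iterate: achieve any rotation
  have multi : ∀ k : ℕ, ∃ μ : Sym2 V → ℕ, IsSTCLabeling G c μ ∧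
      (∀ e, e ∉ EP → μ e = ℓ e) ∧
      (((∀ j, j < r → μ (E j) = ℓ (E ((k + j) % r))) ∧ weakCount G μ ≤ weakCount G ℓ) ∨
        weakCount G μ < weakCount G ℓ) := by
    intro k
    induction k with
    | zero =>
      refine ⟨ℓ, hstc, fun _ _ => rfl, Or.inl ⟨?_, le_rfl⟩⟩
      intro j hj
      rw [show (0 + j) % r = j by rw [Nat.zero_add, Nat.mod_eq_of_lt hj]]
    | succ k ih =>
      obtain ⟨μ, hμ, hagμ, hbr⟩ := ih
      rcases hbr with ⟨hshift, hle⟩ | hlt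
      · -- find the hole
        obtain ⟨w, hw, hw0⟩ := hweak
        have hw0' : ℓ (E w) = 0 := hw0
        obtain ⟨h, hh, hkh⟩ : ∃ h, h < r ∧ (k + h) % r = w := by
          refine ⟨(w + (r - k % r)) % r, modlt _, ?_⟩
          have hkmod := Nat.div_add_mod k r
          have hklt := modlt k
          rw [addR, show k + (w + (r - k % r)) = r * (k / r) + (w + r) by omega,
            Nat.mul_add_mod, Nat.add_mod_right, Nat.mod_eq_of_lt hw]
        have hole : μ (E h) = 0 := by rw [hshift h hh, hkh]; exact hw0'
        -- inner induction: move the hole all the way around the cycle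
        have inner : ∀ t, t ≤ r - 1 → ∃ ν : Sym2 V → ℕ, IsSTCLabeling G c ν ∧
            (∀ e, e ∉ EP → ν e = ℓ e) ∧
            (((∀ s, s < t → ν (E ((h + s) % r)) = μ (E ((h + s + 1) % r))) ∧
              (∀ s, t < s → s < r → ν (E ((h + s) % r)) = μ (E ((h + s) % r))) ∧
              ν (E ((h + t) % r)) = 0 ∧ weakCount G ν ≤ weakCount G μ) ∨
              weakCount G ν < weakCount G μ) := by
          intro t
          induction t with
          | zero =>
            intro _
            refine ⟨μ, hμ, hagμ, Or.inl ⟨fun s hs => absurd hs (Nat.not_lt_zero s),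
              fun s _ _ => rfl, ?_, le_rfl⟩⟩
            rw [Nat.add_zero, Nat.mod_eq_of_lt hh]; exact hole
          | succ t ih =>
            intro ht
            obtain ⟨ν, hν, hagν, hbr⟩ := ih (by omega)
            rcases hbr with ⟨c1, c2, chole, cle⟩ | hlt
            · obtain ⟨ν', hν', hagν', hbr'⟩ := micro ν hν hagν ((h + t) % r) (modlt _) chole
              rcases hbr' with ⟨b1, b2, b3, b4⟩ | hlt'
              · rw [addL] at b1 b2
                refine ⟨ν', hν', hagν', Or.inl ⟨?_, ?_, ?_, le_trans b4 cle⟩⟩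
                · intro s hs
                  rcases Nat.lt_or_ge s t with hst | hst
                  · rw [b3 ((h + s) % r) (modlt _) ?_ ?_]
                    · exact c1 s hst
                    · intro hE
                      have := hcanc h s t (by omega) (by omega) hE; omega
                    · rw [addL]; intro hE
                      have := hcanc h s (t + 1) (by omega) (by omega) hE; omega
                  · have hst' : s = t := by omega
                    subst hst'
                    rw [b1]
                    exact c2 (s + 1) (by omega) (by omega)
                · intro s hts hsr
                  rw [b3 ((h + s) % r) (modlt _) ?_ ?_]
                  · exact c2 s (by omega) hsr
                  · intro hE
                    have := hcanc h s t hsr (by omega) hE; omega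
                  · rw [addL]; intro hE
                    have := hcanc h s (t + 1) hsr (by omega) hE; omega
                · exact b2
              · exact ⟨ν', hν', hagν', Or.inr (lt_of_lt_of_le hlt' cle)⟩
            · exact ⟨ν, hν, hagν, Or.inr hlt⟩
        obtain ⟨ν, hν, hagν, hbr⟩ := inner (r - 1) le_rfl
        rcases hbr with ⟨c1, c2, chole, cle⟩ | hlt
        · refine ⟨ν, hν, hagν, Or.inl ⟨?_, le_trans cle hle⟩⟩
          intro j hj
          obtain ⟨s, hs, hhs⟩ : ∃ s, s < r ∧ (h + s) % r = j := by
            refine ⟨(j + (r - h)) % r, modlt _, ?_⟩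
            rw [addR, show h + (j + (r - h)) = j + r by omega,
              Nat.add_mod_right, Nat.mod_eq_of_lt hj]
          have step1 : ν (E j) = μ (E ((j + 1) % r)) := by
            rcases Nat.lt_or_ge s (r - 1) with hs1 | hs1
            · have hc := c1 s hs1
              rw [hhs] at hc
              rw [hc]
              have : (h + s + 1) % r = (j + 1) % r := by rw [← addL, hhs]
              rw [this]
            · have hseq : s = r - 1 := by omega
              rw [hseq] at hhs
              rw [hhs] at chole
              have hj1 : (j + 1) % r = h := by
                rw [← hhs, addL, show h + (r - 1) + 1 = h + r by omega,
                  Nat.add_mod_right, Nat.mod_eq_of_lt hh]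
              rw [chole, hj1, hole]
          rw [step1, hshift ((j + 1) % r) (modlt _), addR,
            show k + (j + 1) = k + 1 + j by omega]
        · exact ⟨ν, hν, hagν, Or.inr (lt_of_lt_of_le hlt hle)⟩
      · exact ⟨μ, hμ, hagμ, Or.inr hlt⟩
  -- conclude
  intro i hi
  obtain ⟨μ, hμ, hagμ, hbr⟩ := multi i
  refine ⟨μ, hμ, hagμ, ?_⟩
  rcases hbr with ⟨hshift, _⟩ | hlt
  · left
    intro j hj
    have hEj : E ((i + j) % r) = s(P ((i + j) % r), P ((i + j + 1) % r)) := by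
      simp only [hEdef]
      rw [addL]
    show μ (E j) = _
    rw [hshift j hj, hEj]
  · exact Or.inr hlt
end

section
/- Let A be a periphery component, L an STC-labeling of G, and P a cycle in A with at least one weak edge of L on P. If e_1, e_2 ∈ E(P) with e_2 in strong color class q, then there exists an STC-labeling L' agreeing with L outside E(P) such that e_1 has strong color q under L', or L' has strictly fewer weak edges than L. -/
open SimpleGraph

namespace MoveAux


noncomputable def pick (S : Finset ℕ) : ℕ := if h : S.Nonempty then S.min' h else 0

lemma pick_mem {S : Finset ℕ} (h : S.Nonempty) : pick S ∈ S := by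
  unfold pick; rw [dif_pos h]; exact S.min'_mem h

lemma pick_mem_or (S : Finset ℕ) : pick S ∈ S ∨ pick S = 0 := by
  unfold pick
  split
  · exact Or.inl (S.min'_mem _)
  · exact Or.inr rfl

noncomputable def gr (A : ℕ → Finset ℕ) (r x0 : ℕ) : ℕ → ℕ
  | 0 => x0
  | t+1 => pick ((A (t+1)).erase (gr A r x0 t) \ (if t+2 = r then {x0} else ∅))

lemma cycle_color (r : ℕ) (hr : 3 ≤ r) (A : ℕ → Finset ℕ)
    (hcard : ∀ i < r, 2 ≤ (A i).card) (h0 : ∀ i < r, (0:ℕ) ∉ A i)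
    (x0 : ℕ) (hx0 : x0 ∈ A 0) :
    ∃ x : ℕ → ℕ, x 0 = x0 ∧
      (∀ i < r, x i ∈ A i ∨ (x i = 0 ∧ i = r - 1)) ∧
      (∀ i < r, x i = x ((i+1) % r) → x i = 0) ∧
      ((x0 ∉ A (r-1) ∨ 3 ≤ (A (r-1)).card) → ∀ i < r, x i ∈ A i) := by
  set x : ℕ → ℕ := gr A r x0 with hx
  have hx0' : x 0 = x0 := rfl
  have hsucc : ∀ t, x (t+1) = pick ((A (t+1)).erase (x t) \ (if t+2 = r then {x0} else ∅)) := by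
    intro t; rfl
  -- middle steps
  have hmid : ∀ t, t + 1 < r - 1 → x (t+1) ∈ (A (t+1)).erase (x t) := by
    intro t ht
    have hne : ¬ (t + 2 = r) := by omega
    have hnonempty : ((A (t+1)).erase (x t)).Nonempty := by
      have h2 : 2 ≤ (A (t+1)).card := hcard _ (by omega)
      have := Finset.pred_card_le_card_erase (s := A (t+1)) (a := x t)
      refine Finset.card_pos.mp ?_
      omega
    rw [hsucc t, if_neg hne, Finset.sdiff_empty]
    exact pick_mem hnonempty
  -- last step
  have hlastset : x (r-1) ∈ (A (r-1)).erase (x (r-2)) \ {x0} ∨ x (r-1) = 0 := by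
    have h1 : r - 1 = (r - 2) + 1 := by omega
    have h2 : (r - 2) + 2 = r := by omega
    rw [h1, hsucc (r-2), if_pos h2, ← h1]
    exact pick_mem_or _
  have hmem : ∀ i < r, x i ∈ A i ∨ (x i = 0 ∧ i = r - 1) := by
    intro i hi
    rcases Nat.eq_zero_or_pos i with h|h
    · subst h; exact Or.inl hx0
    rcases eq_or_lt_of_le (Nat.succ_le_of_lt hi) with h'|h'
    · -- i = r - 1
      have : i = r - 1 := by omega
      subst this
      rcases hlastset with hm|hm
      · exact Or.inl (Finset.mem_of_mem_erase (Finset.mem_sdiff.mp hm).1)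
      · exact Or.inr ⟨hm, rfl⟩
    · -- 0 < i < r - 1
      obtain ⟨t, rfl⟩ := Nat.exists_eq_succ_of_ne_zero (Nat.pos_iff_ne_zero.mp h)
      exact Or.inl (Finset.mem_of_mem_erase (hmid t (by omega)))
  have hadj2 : ∀ i < r, x i = x ((i+1) % r) → x i = 0 := by
    intro i hi heq
    rcases eq_or_lt_of_le (Nat.succ_le_of_lt hi) with h'|h'
    · -- i = r - 1, (i+1) % r = 0
      have hi1 : i = r - 1 := by omega
      have hm : (i+1) % r = 0 := by
        rw [show i + 1 = r by omega, Nat.mod_self]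
      rw [hm, hx0'] at heq
      rcases hlastset with hmem'|hz
      · exfalso
        have := (Finset.mem_sdiff.mp hmem').2
        rw [← hi1] at this
        exact this (Finset.mem_singleton.mpr heq)
      · rw [hi1]; exact hz
    · -- i + 1 < r
      have hm : (i+1) % r = i + 1 := Nat.mod_eq_of_lt h'
      rw [hm] at heq
      rcases eq_or_lt_of_le (Nat.succ_le_of_lt h') with h''|h''
      · -- i + 1 = r - 1
        have hi2 : i = r - 2 := by omega
        rcases hlastset with hmem'|hz
        · exfalso
          have := Finset.ne_of_mem_erase (Finset.mem_sdiff.mp hmem').1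
          rw [← hi2, show r - 1 = i + 1 by omega] at this
          exact this heq.symm
        · rw [heq, show i + 1 = r - 1 by omega]; exact hz
      · -- i + 1 < r - 1
        exfalso
        exact Finset.ne_of_mem_erase (hmid i (by omega)) heq.symm
  refine ⟨x, hx0', hmem, hadj2, ?_⟩
  intro hcond i hi
  rcases hmem i hi with h|⟨hz, hi1⟩
  · exact h
  subst hi1
  -- show the last pick set is nonempty
  have hnonempty : ((A (r-1)).erase (x (r-2)) \ {x0}).Nonempty := by
    have h2 : 2 ≤ (A (r-1)).card := hcard _ (by omega)
    have he1 : (A (r-1)).card - 1 ≤ ((A (r-1)).erase (x (r-2))).card :=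
      Finset.pred_card_le_card_erase
    rcases hcond with hc|hc
    · have : x0 ∉ (A (r-1)).erase (x (r-2)) := fun hmm => hc (Finset.mem_of_mem_erase hmm)
      rw [Finset.sdiff_singleton_eq_erase, Finset.erase_eq_of_notMem this]
      refine Finset.card_pos.mp (by omega)
    · have := Finset.card_le_card_sdiff_add_card (s := (A (r-1)).erase (x (r-2))) (t := {x0})
      have hs : ({x0} : Finset ℕ).card = 1 := Finset.card_singleton x0
      refine Finset.card_pos.mp (by omega)
  have h1 : r - 1 = (r - 2) + 1 := by omega
  have h2 : (r - 2) + 2 = r := by omega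
  have : x (r-1) ∈ (A (r-1)).erase (x (r-2)) \ {x0} := by
    rw [h1, hsucc (r-2), if_pos h2, ← h1]
    exact pick_mem hnonempty
  exact Finset.mem_of_mem_erase (Finset.mem_sdiff.mp this).1



lemma succ_mod_inj {r i j : ℕ} (hi : i < r) (hj : j < r)
    (h : (i+1) % r = (j+1) % r) : i = j := by
  rcases Nat.lt_or_ge (i+1) r with h1|h1 <;> rcases Nat.lt_or_ge (j+1) r with h2|h2
  · rw [Nat.mod_eq_of_lt h1, Nat.mod_eq_of_lt h2] at h; omega
  · have : j + 1 = r := by omega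
    rw [Nat.mod_eq_of_lt h1, this, Nat.mod_self] at h; omega
  · have : i + 1 = r := by omega
    rw [Nat.mod_eq_of_lt h2, this, Nat.mod_self] at h; omega
  · omega

lemma two_mod_ne {r i : ℕ} (hr : 3 ≤ r) (hi : i < r) : (i+2) % r ≠ i := by
  rcases Nat.lt_or_ge (i+2) r with h1|h1
  · rw [Nat.mod_eq_of_lt h1]; omega
  · rw [Nat.mod_eq_sub_mod h1, Nat.mod_eq_of_lt (by omega)]; omega

lemma build {V : Type*} (G : SimpleGraph V) (c : ℕ) (ℓ : Sym2 V → ℕ)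
    (hstc : IsSTCLabeling G c ℓ) (r : ℕ) (hr : 3 ≤ r) (P : ℕ → V)
    (hinj : ∀ i < r, ∀ j < r, P i = P j → i = j)
    (EP : Set (Sym2 V)) (hEP : EP = {e | ∃ i < r, e = s(P i, P ((i + 1) % r))})
    (x : ℕ → ℕ) (hle : ∀ i < r, x i ≤ c)
    (hext : ∀ i < r, x i ≠ 0 → ∀ w : V,
      (G.Adj (P i) w → s(P i, w) ∉ EP → ℓ s(P i, w) ≠ x i) ∧
      (G.Adj (P ((i+1) % r)) w → s(P ((i+1) % r), w) ∉ EP → ℓ s(P ((i+1) % r), w) ≠ x i))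
    (hadj2 : ∀ i < r, x i = x ((i+1) % r) → x i = 0) :
    ∃ ℓ' : Sym2 V → ℕ, IsSTCLabeling G c ℓ' ∧ (∀ e ∉ EP, ℓ' e = ℓ e) ∧
      ∀ i < r, ℓ' s(P i, P ((i+1) % r)) = x i := by
  classical
  have hr0 : 0 < r := by omega
  have hmodlt : ∀ i : ℕ, (i+1) % r < r := fun i => Nat.mod_lt _ hr0
  -- uniqueness of edge index
  have huniq : ∀ i < r, ∀ j < r,
      s(P i, P ((i+1) % r)) = s(P j, P ((j+1) % r)) → i = j := by
    intro i hi j hj h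
    rcases Sym2.eq_iff.mp h with ⟨h1, _⟩|⟨h1, h2⟩
    · exact hinj i hi j hj h1
    · -- P i = P ((j+1)%r) and P ((i+1)%r) = P j
      have e1 : i = (j+1) % r := hinj i hi _ (hmodlt j) h1
      have e2 : (i+1) % r = j := hinj _ (hmodlt i) j hj h2
      exfalso
      apply two_mod_ne hr hi (i := i)
      rw [show i + 2 = (i + 1) + 1 by omega, ← Nat.mod_add_mod, e2, ← e1]
  set ℓ' : Sym2 V → ℕ := fun e =>
    if h : ∃ i, i < r ∧ e = s(P i, P ((i+1) % r)) then x h.choose else ℓ e with hℓ'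
  have hval : ∀ i < r, ℓ' s(P i, P ((i+1) % r)) = x i := by
    intro i hi
    have hex : ∃ j, j < r ∧ s(P i, P ((i+1) % r)) = s(P j, P ((j+1) % r)) := ⟨i, hi, rfl⟩
    rw [hℓ']
    simp only [dif_pos hex]
    congr 1
    exact (huniq _ hex.choose_spec.1 _ hi hex.choose_spec.2.symm)
  have hout : ∀ e ∉ EP, ℓ' e = ℓ e := by
    intro e he
    have : ¬ ∃ i, i < r ∧ e = s(P i, P ((i+1) % r)) := by
      intro ⟨i, hi, hei⟩
      exact he (by rw [hEP]; exact ⟨i, hi, hei⟩)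
    exact dif_neg this
  have hEPval : ∀ e ∈ EP, ∃ i, i < r ∧ e = s(P i, P ((i+1) % r)) ∧ ℓ' e = x i := by
    intro e he
    rw [hEP] at he
    obtain ⟨i, hi, hei⟩ := he
    exact ⟨i, hi, hei, by rw [hei]; exact hval i hi⟩
  refine ⟨ℓ', ⟨?_, ?_⟩, hout, hval⟩
  · -- bound
    intro e he
    by_cases hmem : e ∈ EP
    · obtain ⟨i, hi, _, hv⟩ := hEPval e hmem
      rw [hv]; exact hle i hi
    · rw [hout e hmem]; exact hstc.1 e he
  -- STC property
  have mixed : ∀ u v w : V, G.Adj u v → G.Adj v w → s(u,v) ∈ EP → s(v,w) ∉ EP →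
      ℓ' s(u,v) = ℓ' s(v,w) → ℓ' s(u,v) = 0 := by
    intro u v w huv hvw h1 h2 heq
    obtain ⟨i, hi, hei, hv⟩ := hEPval _ h1
    rw [hv]
    by_contra hx
    have hlv : ℓ s(v,w) = x i := by rw [← hout _ h2, ← heq, hv]
    rcases Sym2.eq_iff.mp hei with ⟨hu', hv'⟩|⟨hu', hv'⟩
    · -- v = P ((i+1)%r)
      exact (hext i hi hx w).2 (hv' ▸ hvw) (hv' ▸ h2) (hv' ▸ hlv)
    · -- v = P i
      exact (hext i hi hx w).1 (hv' ▸ hvw) (hv' ▸ h2) (hv' ▸ hlv)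
  intro u v w huw huv hvw hnadj heq
  by_cases h1 : s(u,v) ∈ EP <;> by_cases h2 : s(v,w) ∈ EP
  · -- both on cycle
    obtain ⟨i, hi, hei, hvi⟩ := hEPval _ h1
    obtain ⟨j, hj, hej, hvj⟩ := hEPval _ h2
    have hij : i ≠ j := by
      intro h
      subst h
      have : s(u,v) = s(v,w) := by rw [hei, hej]
      rcases Sym2.eq_iff.mp this with ⟨ha, _⟩|⟨ha, _⟩
      · exact (G.ne_of_adj huv ha).elim
      · exact huw ha
    have hxij : x i = x j := by rw [← hvi, ← hvj, heq]
    rw [hvi]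
    -- v position analysis
    have hv1 : v = P i ∨ v = P ((i+1) % r) := by
      rcases Sym2.eq_iff.mp hei with ⟨_, hb⟩|⟨_, hb⟩
      · exact Or.inr hb
      · exact Or.inl hb
    have hv2 : v = P j ∨ v = P ((j+1) % r) := by
      rcases Sym2.eq_iff.mp hej with ⟨ha, _⟩|⟨ha, _⟩
      · exact Or.inl ha
      · exact Or.inr ha
    rcases hv1 with hv1|hv1 <;> rcases hv2 with hv2|hv2
    · exact absurd (hinj i hi j hj (hv1.symm.trans hv2)) hij
    · -- i = (j+1) % r
      have : i = (j+1) % r := hinj i hi _ (hmodlt j) (hv1.symm.trans hv2)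
      have := hadj2 j hj (by rw [← this, hxij])
      rw [hxij, this]
    · -- j = (i+1) % r
      have : j = (i+1) % r := hinj j hj _ (hmodlt i) (hv2.symm.trans hv1)
      exact hadj2 i hi (by rw [← this, hxij])
    · exact absurd (succ_mod_inj hi hj
        (hinj _ (hmodlt i) _ (hmodlt j) (hv1.symm.trans hv2))) hij
  · exact mixed u v w huv hvw h1 h2 heq
  · have hsym1 : s(w,v) = s(v,w) := Sym2.eq_swap
    have hsym2 : s(v,u) = s(u,v) := Sym2.eq_swap
    have := mixed w v u hvw.symm huv.symm (hsym1 ▸ h2) (hsym2 ▸ h1)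
      (by rw [hsym1, hsym2, heq])
    rw [heq, ← hsym1, this]
  · rw [hout _ h1] at heq ⊢
    rw [hout _ h2] at heq
    exact hstc.2 u v w huw huv hvw hnadj heq


end MoveAux

/-- Moving a strong color around a cycle inside a periphery component that
carries a weak edge: if `e₂` on the cycle has strong color `q`, then there is
a labeling agreeing with `L` outside the cycle in which `e₁` has strong color
`q`, or one with strictly fewer weak edges. -/
theorem move_strong_color_in_cycle {V : Type*} [Fintype V] [DecidableEq V]
    (G : SimpleGraph V) (c : ℕ)
    (A : Set V) (hdeg : ∀ a ∈ A, (G.neighborSet a).ncard ≤ c / 2 + 1)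
    (ℓ : Sym2 V → ℕ) (hstc : IsSTCLabeling G c ℓ)
    (r : ℕ) (hr : 3 ≤ r) (P : ℕ → V)
    (hadj : ∀ i < r, G.Adj (P i) (P ((i + 1) % r)))
    (hA : ∀ i < r, P i ∈ A)
    (hinj : ∀ i < r, ∀ j < r, P i = P j → i = j)
    (EP : Set (Sym2 V)) (hEP : EP = {e | ∃ i < r, e = s(P i, P ((i + 1) % r))})
    (hweak : ∃ e ∈ EP, ℓ e = 0)
    (e₁ e₂ : Sym2 V) (he₁ : e₁ ∈ EP) (he₂ : e₂ ∈ EP)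
    (q : ℕ) (hq : 1 ≤ q ∧ q ≤ c) (he₂q : ℓ e₂ = q) :
    ∃ ℓ' : Sym2 V → ℕ, IsSTCLabeling G c ℓ' ∧
      (∀ e : Sym2 V, e ∉ EP → ℓ' e = ℓ e) ∧
      (ℓ' e₁ = q ∨ weakCount G ℓ' < weakCount G ℓ) := by
  classical
  obtain ⟨hq1, hq2⟩ := hq
  have hr0 : 0 < r := by omega
  have hmodlt : ∀ i : ℕ, (i + 1) % r < r := fun i => Nat.mod_lt _ hr0
  have hEPsub : EP ⊆ G.edgeSet := by
    rw [hEP]; rintro e ⟨i, hi, rfl⟩; exact (hadj i hi)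
  set Ni : ℕ → Set V := fun i => {w | G.Adj (P i) w ∧ s(P i, w) ∉ EP} with hNi
  set Xf : ℕ → Finset ℕ := fun i =>
    ((Set.toFinite (Ni i)).toFinset.image fun w => ℓ s(P i, w)) ∩ Finset.Icc 1 c with hXf
  set AL : ℕ → Finset ℕ := fun i => Finset.Icc 1 c \ (Xf i ∪ Xf ((i + 1) % r)) with hALdef
  have hXmem : ∀ i a, a ∈ Xf i ↔
      ((∃ w, (G.Adj (P i) w ∧ s(P i, w) ∉ EP) ∧ ℓ s(P i, w) = a) ∧ (1 ≤ a ∧ a ≤ c)) := by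
    intro i a
    simp only [hXf, Finset.mem_inter, Finset.mem_image, Set.Finite.mem_toFinset, hNi,
      Set.mem_setOf_eq, Finset.mem_Icc]
  have hXcard : ∀ i < r, (Xf i).card + 1 ≤ c / 2 := by
    intro i hi
    have hb_idx : (i + (r - 1)) % r < r := Nat.mod_lt _ hr0
    have hsucc_b : ((i + (r - 1)) % r + 1) % r = i := by
      rw [Nat.mod_add_mod, show i + (r - 1) + 1 = i + r by omega, Nat.add_mod_right,
        Nat.mod_eq_of_lt hi]
    have hadj_b : G.Adj (P i) (P ((i + (r - 1)) % r)) := by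
      have := hadj _ hb_idx
      rw [hsucc_b] at this
      exact this.symm
    have hab : P ((i + 1) % r) ≠ P ((i + (r - 1)) % r) := by
      intro h
      have h2 := hinj _ (hmodlt i) _ hb_idx h
      have h3 : ((i + 1) % r + 1) % r = i := by rw [h2, hsucc_b]
      rw [Nat.mod_add_mod] at h3
      have h4 : (i + 2) % r = i := by rw [show i + 2 = i + 1 + 1 by omega]; exact h3
      -- derive False
      rcases Nat.lt_or_ge (i + 2) r with h5|h5
      · rw [Nat.mod_eq_of_lt h5] at h4; omega
      · rw [Nat.mod_eq_sub_mod h5, Nat.mod_eq_of_lt (by omega)] at h4; omega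
    have haEP : s(P i, P ((i + 1) % r)) ∈ EP := by rw [hEP]; exact ⟨i, hi, rfl⟩
    have hbEP : s(P i, P ((i + (r - 1)) % r)) ∈ EP := by
      rw [hEP]
      refine ⟨(i + (r - 1)) % r, hb_idx, ?_⟩
      rw [hsucc_b]
      exact Sym2.eq_swap
    have haN : P ((i + 1) % r) ∉ Ni i := by
      simp only [hNi, Set.mem_setOf_eq]; tauto
    have hbN : P ((i + (r - 1)) % r) ∉ Ni i := by
      simp only [hNi, Set.mem_setOf_eq]; tauto
    have hins : (insert (P ((i + 1) % r)) (insert (P ((i + (r - 1)) % r)) (Ni i))).ncard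
        = (Ni i).ncard + 2 := by
      rw [Set.ncard_insert_of_notMem (by
        simp only [Set.mem_insert_iff]
        push_neg
        exact ⟨hab, haN⟩) (Set.toFinite _),
        Set.ncard_insert_of_notMem hbN (Set.toFinite _)]
    have hsubN : insert (P ((i + 1) % r)) (insert (P ((i + (r - 1)) % r)) (Ni i))
        ⊆ G.neighborSet (P i) := by
      intro w hw
      rcases Set.mem_insert_iff.mp hw with rfl|hw
      · exact hadj i hi
      rcases Set.mem_insert_iff.mp hw with rfl|hw
      · exact hadj_b
      · simp only [hNi, Set.mem_setOf_eq] at hw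
        exact hw.1
    have hle2 : (Ni i).ncard + 2 ≤ c / 2 + 1 := by
      rw [← hins]
      exact le_trans (Set.ncard_le_ncard hsubN (Set.toFinite _)) (hdeg _ (hA i hi))
    have hXle : (Xf i).card ≤ (Ni i).ncard := by
      simp only [hXf]
      refine le_trans (Finset.card_le_card Finset.inter_subset_left) ?_
      refine le_trans Finset.card_image_le ?_
      rw [Set.ncard_eq_toFinset_card _ (Set.toFinite (Ni i))]
    omega
  have hALcard : ∀ i < r, 2 ≤ (AL i).card := by
    intro i hi
    have h1 := hXcard i hi
    have h2 := hXcard _ (hmodlt i)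
    have hIcc : (Finset.Icc 1 c).card = c := by simp
    have hle3 := Finset.card_le_card_sdiff_add_card (s := Finset.Icc 1 c)
      (t := Xf i ∪ Xf ((i + 1) % r))
    have hun := Finset.card_union_le (Xf i) (Xf ((i + 1) % r))
    have hc2 : c / 2 * 2 ≤ c := Nat.div_mul_le_self c 2
    simp only [hALdef]
    omega
  have hALicc : ∀ i a, a ∈ AL i → 1 ≤ a ∧ a ≤ c := by
    intro i a ha
    simp only [hALdef, Finset.mem_sdiff, Finset.mem_Icc] at ha
    exact ha.1
  have hAL0 : ∀ i, (0 : ℕ) ∉ AL i := by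
    intro i h
    have := hALicc i 0 h
    omega
  have hextAL : ∀ x : ℕ → ℕ, (∀ i < r, x i = 0 ∨ x i ∈ AL i) →
      ∀ i < r, x i ≠ 0 → ∀ w : V,
        (G.Adj (P i) w → s(P i, w) ∉ EP → ℓ s(P i, w) ≠ x i) ∧
        (G.Adj (P ((i + 1) % r)) w → s(P ((i + 1) % r), w) ∉ EP →
          ℓ s(P ((i + 1) % r), w) ≠ x i) := by
    intro x hx i hi hxne w
    have hmem : x i ∈ AL i := (hx i hi).resolve_left hxne
    have hicc := hALicc i _ hmem
    have hnotin : x i ∉ Xf i ∪ Xf ((i + 1) % r) := by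
      simp only [hALdef, Finset.mem_sdiff] at hmem
      exact hmem.2
    constructor
    · intro hadjw hnotEP heq
      exact hnotin (Finset.mem_union_left _ ((hXmem i (x i)).mpr ⟨⟨w, ⟨hadjw, hnotEP⟩, heq⟩, hicc⟩))
    · intro hadjw hnotEP heq
      exact hnotin (Finset.mem_union_right _
        ((hXmem ((i + 1) % r) (x i)).mpr ⟨⟨w, ⟨hadjw, hnotEP⟩, heq⟩, hicc⟩))
  have hdec : ∀ ℓ' : Sym2 V → ℕ, (∀ e ∉ EP, ℓ' e = ℓ e) →
      (∀ i < r, ℓ' s(P i, P ((i + 1) % r)) ≠ 0) → weakCount G ℓ' < weakCount G ℓ := by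
    intro ℓ' hout hstrong
    obtain ⟨e₀, he₀EP, he₀w⟩ := hweak
    have hssub : {e ∈ G.edgeSet | ℓ' e = 0} ⊆ {e ∈ G.edgeSet | ℓ e = 0} := by
      rintro e ⟨heE, hez⟩
      by_cases hmem : e ∈ EP
      · exfalso
        rw [hEP] at hmem
        obtain ⟨i, hi, rfl⟩ := hmem
        exact hstrong i hi hez
      · exact ⟨heE, by rw [← hout e hmem]; exact hez⟩
    have hin : e₀ ∈ {e ∈ G.edgeSet | ℓ e = 0} := ⟨hEPsub he₀EP, he₀w⟩
    have hnotin : e₀ ∉ {e ∈ G.edgeSet | ℓ' e = 0} := by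
      rintro ⟨-, hez⟩
      rw [hEP] at he₀EP
      obtain ⟨i, hi, rfl⟩ := he₀EP
      exact hstrong i hi hez
    exact Set.ncard_lt_ncard ((Set.ssubset_iff_of_subset hssub).mpr ⟨e₀, hin, hnotin⟩)
      (Set.toFinite _)
  obtain ⟨i₁, hi₁, he₁f⟩ : ∃ i, i < r ∧ e₁ = s(P i, P ((i + 1) % r)) := by
    rw [hEP] at he₁
    obtain ⟨i, hi, hei⟩ := he₁
    exact ⟨i, hi, hei⟩
  -- shift lemmas
  have hkey : ∀ s, s ≤ r → ∀ i < r, (((i + (r - s)) % r + s) % r) = i := by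
    intro s hs i hi
    rw [Nat.mod_add_mod, show i + (r - s) + s = i + r by omega, Nat.add_mod_right,
      Nat.mod_eq_of_lt hi]
  have hkey2 : ∀ s i : ℕ, ((i + 1) % r + (r - s)) % r = ((i + (r - s)) % r + 1) % r := by
    intro s i
    rw [Nat.mod_add_mod, Nat.mod_add_mod, show i + 1 + (r - s) = i + (r - s) + 1 by omega]
  have hkeylt : ∀ i s : ℕ, (i + (r - s)) % r < r := fun i s => Nat.mod_lt _ hr0
    -- continuing: hmk, then case split
  have hmk : ∀ s, s < r → ∀ x' : ℕ → ℕ,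
      (∀ i < r, x' i ∈ AL ((i + s) % r) ∨ (x' i = 0 ∧ i = r - 1)) →
      (∀ i < r, x' i = x' ((i + 1) % r) → x' i = 0) →
      ∃ ℓ' : Sym2 V → ℕ, IsSTCLabeling G c ℓ' ∧ (∀ e ∉ EP, ℓ' e = ℓ e) ∧
        (∀ i < r, ℓ' s(P i, P ((i + 1) % r)) = x' ((i + (r - s)) % r)) := by
    intro s hs x' hmem' hadj'
    set x : ℕ → ℕ := fun i => x' ((i + (r - s)) % r) with hxdef
    have hxmem : ∀ i < r, x i = 0 ∨ x i ∈ AL i := by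
      intro i hi
      rcases hmem' _ (hkeylt i s) with h|h
      · right
        rw [hkey s (le_of_lt hs) i hi] at h
        exact h
      · left; exact h.1
    have hxadj : ∀ i < r, x i = x ((i + 1) % r) → x i = 0 := by
      intro i hi heq
      apply hadj' _ (hkeylt i s)
      simp only [hxdef] at heq ⊢
      rw [← hkey2 s i]
      exact heq
    have hxle : ∀ i < r, x i ≤ c := by
      intro i hi
      rcases hxmem i hi with h|h
      · omega
      · exact (hALicc i _ h).2
    obtain ⟨ℓ', h1, h2, h3⟩ :=
      MoveAux.build G c ℓ hstc r hr P hinj EP hEP x hxle (hextAL x hxmem) hxadj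
    exact ⟨ℓ', h1, h2, fun i hi => h3 i hi⟩
  by_cases hq_in : q ∈ AL i₁
  · -- branch (a): give e₁ the color q
    have hA'card : ∀ i < r, 2 ≤ (AL ((i + i₁) % r)).card := fun i _ => hALcard _ (Nat.mod_lt _ hr0)
    have hA'0 : ∀ i < r, (0 : ℕ) ∉ AL ((i + i₁) % r) := fun i _ => hAL0 _
    have hx0 : q ∈ AL ((0 + i₁) % r) := by
      rw [Nat.zero_add, Nat.mod_eq_of_lt hi₁]
      exact hq_in
    obtain ⟨x', hx'0, hmem', hadj', -⟩ :=
      MoveAux.cycle_color r hr (fun k => AL ((k + i₁) % r)) hA'card hA'0 q hx0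
    obtain ⟨ℓ', hstc', hout', hval'⟩ := hmk i₁ hi₁ x' hmem' hadj'
    refine ⟨ℓ', hstc', hout', Or.inl ?_⟩
    rw [he₁f, hval' i₁ hi₁,
      show (i₁ + (r - i₁)) % r = 0 by rw [show i₁ + (r - i₁) = r by omega, Nat.mod_self], hx'0]
  · by_cases hsB : ∃ s, s < r ∧ ∃ χ, χ ∈ AL s ∧
        (χ ∉ AL ((s + (r - 1)) % r) ∨ 3 ≤ (AL ((s + (r - 1)) % r)).card)
    · -- branch (b1): all-strong recoloring via a good start
      obtain ⟨s, hs, χ, hχ, hcond⟩ := hsB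
      have hA'card : ∀ i < r, 2 ≤ (AL ((i + s) % r)).card := fun i _ => hALcard _ (Nat.mod_lt _ hr0)
      have hA'0 : ∀ i < r, (0 : ℕ) ∉ AL ((i + s) % r) := fun i _ => hAL0 _
      have hx0 : χ ∈ AL ((0 + s) % r) := by
        rw [Nat.zero_add, Nat.mod_eq_of_lt hs]
        exact hχ
      have hac : (r - 1 + s) % r = (s + (r - 1)) % r := by rw [Nat.add_comm]
      have hcond' : χ ∉ AL ((r - 1 + s) % r) ∨ 3 ≤ (AL ((r - 1 + s) % r)).card := by
        rw [hac]; exact hcond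
      obtain ⟨x', hx'0, hmem', hadj', hstrongf⟩ :=
        MoveAux.cycle_color r hr (fun k => AL ((k + s) % r)) hA'card hA'0 χ hx0
      have hall : ∀ i < r, x' i ∈ AL ((i + s) % r) := hstrongf hcond'
      obtain ⟨ℓ', hstc', hout', hval'⟩ := hmk s hs x' (fun i hi => Or.inl (hall i hi)) hadj'
      refine ⟨ℓ', hstc', hout', Or.inr (hdec ℓ' hout' ?_)⟩
      intro i hi h0
      rw [hval' i hi] at h0
      exact hAL0 _ (h0 ▸ hall _ (hkeylt i s))
    · -- branch (b2): all lists equal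
      push_neg at hsB
      have heqprev : ∀ s, s < r → AL s = AL ((s + (r - 1)) % r) := by
        intro s hs
        have hne : (AL s).Nonempty := Finset.card_pos.mp (by have := hALcard s hs; omega)
        obtain ⟨χ, hχ⟩ := hne
        have h := hsB s hs
        have hsubAL : AL s ⊆ AL ((s + (r - 1)) % r) := fun a ha => (h a ha).1
        exact Finset.eq_of_subset_of_card_le hsubAL
          (by have h1 := (h χ hχ).2; have h2 := hALcard s hs; omega)
      have hstep : ∀ t, t < r → AL ((t + 1) % r) = AL t := by
        intro t ht
        have h := heqprev _ (hmodlt t)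
        have h2 : ((t + 1) % r + (r - 1)) % r = t := by
          rw [Nat.mod_add_mod, show t + 1 + (r - 1) = t + r by omega, Nat.add_mod_right,
            Nat.mod_eq_of_lt ht]
        rw [h2] at h
        exact h
      have hallT : ∀ k : ℕ, AL (k % r) = AL 0 := by
        intro k
        induction k with
        | zero => rw [Nat.zero_mod]
        | succ n ih =>
          have h1 : (n + 1) % r = (n % r + 1) % r := (Nat.mod_add_mod n r 1).symm
          rw [h1, hstep _ (Nat.mod_lt _ hr0), ih]
      have hallEq : ∀ i, i < r → AL i = AL 0 := by
        intro i hi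
        have := hallT i
        rwa [Nat.mod_eq_of_lt hi] at this
      have hcardT : (AL 0).card = 2 := by
        have h2 := hALcard 0 hr0
        have hne : (AL 0).Nonempty := Finset.card_pos.mp (by omega)
        obtain ⟨χ, hχ⟩ := hne
        have h3 := (hsB 0 hr0 χ hχ).2
        have h4 : AL ((0 + (r - 1)) % r) = AL 0 := by
          apply hallEq
          rw [Nat.zero_add]
          exact Nat.mod_lt _ hr0
        rw [h4] at h3
        omega
      obtain ⟨α, β, hαβ, hT⟩ := Finset.card_eq_two.mp hcardT
      by_cases hpar : r % 2 = 0
      · -- r even: alternating strong coloring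
        set x : ℕ → ℕ := fun i => if i % 2 = 0 then α else β with hxd
        have hxmem : ∀ i < r, x i ∈ AL i := by
          intro i hi
          rw [hallEq i hi, hT]
          by_cases h : i % 2 = 0 <;> simp [hxd, h]
        have hxadj : ∀ i < r, x i = x ((i + 1) % r) → x i = 0 := by
          intro i hi heq
          exfalso
          have hval2 : ∀ j, j % 2 = 0 → x j = α := by
            intro j hj
            show (if j % 2 = 0 then α else β) = α
            rw [if_pos hj]
          have hval3 : ∀ j, j % 2 ≠ 0 → x j = β := by
            intro j hj
            show (if j % 2 = 0 then α else β) = β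
            rw [if_neg hj]
          have hne : x i ≠ x ((i + 1) % r) := by
            rcases Nat.lt_or_ge (i + 1) r with h|h
            · rw [Nat.mod_eq_of_lt h]
              by_cases hp : i % 2 = 0
              · rw [hval2 i hp, hval3 (i + 1) (by omega)]; exact hαβ
              · rw [hval3 i hp, hval2 (i + 1) (by omega)]; exact hαβ.symm
            · have hm0 : (i + 1) % r = 0 := by rw [show i + 1 = r by omega, Nat.mod_self]
              rw [hm0, hval3 i (by omega), hval2 0 (by norm_num)]
              exact hαβ.symm
          exact hne heq
        obtain ⟨ℓ', hstc', hout', hval'⟩ := MoveAux.build G c ℓ hstc r hr P hinj EP hEP x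
          (fun i hi => (hALicc i _ (hxmem i hi)).2)
          (hextAL x (fun i hi => Or.inr (hxmem i hi))) hxadj
        refine ⟨ℓ', hstc', hout', Or.inr (hdec ℓ' hout' ?_)⟩
        intro i hi h0
        rw [hval' i hi] at h0
        exact hAL0 i (h0 ▸ hxmem i hi)
      · -- r odd: contradiction
        exfalso
        set U : Finset ℕ := Finset.Icc 1 c \ AL 0 with hUd
        have hXsubU : ∀ i, i < r → Xf i ⊆ U := by
          intro i hi a ha
          have hicc : a ∈ Finset.Icc 1 c := by
            rw [Finset.mem_Icc]; exact ((hXmem i a).mp ha).2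
          rw [hUd, Finset.mem_sdiff]
          refine ⟨hicc, fun hmem => ?_⟩
          rw [← hallEq i hi] at hmem
          simp only [hALdef, Finset.mem_sdiff, Finset.mem_union] at hmem
          exact hmem.2 (Or.inl ha)
        have hUsub : ∀ i, i < r → U ⊆ Xf i ∪ Xf ((i + 1) % r) := by
          intro i hi a ha
          rw [hUd, Finset.mem_sdiff] at ha
          by_contra hnot
          apply ha.2
          rw [← hallEq i hi]
          simp only [hALdef]
          exact Finset.mem_sdiff.mpr ⟨ha.1, hnot⟩
        have hXeqU : ∀ i, i < r → Xf i ∪ Xf ((i + 1) % r) = U := by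
          intro i hi
          exact Finset.Subset.antisymm
            (Finset.union_subset (hXsubU i hi) (hXsubU _ (hmodlt i))) (hUsub i hi)
        have hTsub : AL 0 ⊆ Finset.Icc 1 c := by
          intro a ha; rw [Finset.mem_Icc]; exact hALicc 0 a ha
        have hUcard : U.card = c - 2 := by
          rw [hUd, Finset.card_sdiff_of_subset hTsub, hcardT]; simp
        have hsum : ∀ i, i < r → c - 2 ≤ (Xf i).card + (Xf ((i + 1) % r)).card := by
          intro i hi
          have h := Finset.card_union_le (Xf i) (Xf ((i + 1) % r))
          rw [hXeqU i hi, hUcard] at h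
          exact h
        have hXcardEq : ∀ i, i < r → (Xf i).card = c / 2 - 1 := by
          intro i hi
          have h1 := hXcard i hi
          have h2 := hXcard _ (hmodlt i)
          have h3 := hsum i hi
          omega
        have hdisj : ∀ i, i < r → Xf ((i + 1) % r) = U \ Xf i := by
          intro i hi
          have hcap : (Xf i ∩ Xf ((i + 1) % r)).card = 0 := by
            have h := Finset.card_union_add_card_inter (Xf i) (Xf ((i + 1) % r))
            rw [hXeqU i hi, hUcard] at h
            have h1 := hXcardEq i hi
            have h2 := hXcardEq _ (hmodlt i)
            have h3 := hXcard i hi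
            omega
          have hsub2 : Xf ((i + 1) % r) ⊆ U \ Xf i := by
            intro a ha
            rw [Finset.mem_sdiff]
            refine ⟨hXsubU _ (hmodlt i) ha, fun hxa => ?_⟩
            have hmem2 : a ∈ Xf i ∩ Xf ((i + 1) % r) := Finset.mem_inter.mpr ⟨hxa, ha⟩
            rw [Finset.card_eq_zero.mp hcap] at hmem2
            exact Finset.notMem_empty a hmem2
          refine Finset.eq_of_subset_of_card_le hsub2 ?_
          rw [Finset.card_sdiff_of_subset (hXsubU i hi), hUcard, hXcardEq i hi, hXcardEq _ (hmodlt i)]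
          have h3 := hXcard i hi
          have h4 := hsum i hi
          have h5 := hXcard _ (hmodlt i)
          have h6 := hXcardEq i hi
          have h7 := hXcardEq _ (hmodlt i)
          omega
        have hiter : ∀ k : ℕ, Xf (k % r) = if k % 2 = 0 then Xf 0 else U \ Xf 0 := by
          intro k
          induction k with
          | zero => simp
          | succ n ih =>
            have h1 : (n + 1) % r = (n % r + 1) % r := (Nat.mod_add_mod n r 1).symm
            rw [h1, hdisj _ (Nat.mod_lt _ hr0), ih]
            by_cases hp : n % 2 = 0
            · rw [if_pos hp, if_neg (by omega)]
            · rw [if_neg hp, if_pos (by omega), Finset.sdiff_sdiff_eq_self (hXsubU 0 hr0)]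
        have hfin : Xf 0 = U \ Xf 0 := by
          have h := hiter r
          rw [Nat.mod_self, if_neg (by omega)] at h
          exact h
        have hX0empty : Xf 0 = ∅ := by
          rcases Finset.eq_empty_or_nonempty (Xf 0) with h|hne2
          · exact h
          · obtain ⟨a, ha⟩ := hne2
            have h2 : a ∈ U \ Xf 0 := hfin ▸ ha
            exact ((Finset.mem_sdiff.mp h2).2 ha).elim
        have hUempty : U = ∅ := by
          rw [hX0empty, Finset.sdiff_empty] at hfin
          exact hfin.symm
        apply hq_in
        have hIccsub : Finset.Icc 1 c ⊆ AL 0 := by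
          intro a ha
          by_contra hna
          have haU : a ∈ U := by rw [hUd, Finset.mem_sdiff]; exact ⟨ha, hna⟩
          rw [hUempty] at haU
          exact Finset.notMem_empty a haU
        rw [hallEq i₁ hi₁]
        exact hIccsub (Finset.mem_Icc.mpr ⟨hq1, hq2⟩)
end
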